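/- Let (Ω, Σ, μ) be a complete probability space, X a Banach space, and f : Ω → X a Bochner integrable function. Then f is McShane integrable (with respect to any quasi-Radon outer regular topology generating Σ, e.g. Lebesgue measure on [0,1]) and the McShane integral equals the Bochner integral. -/

import Mathlib

open MeasureTheory Topology Filter Set

section Defs

variable {Ω : Type*} [MeasurableSpace Ω] [TopologicalSpace Ω]
variable {X : Type*} [NormedAddCommGroup X] [NormedSpace ℝ X]

/-- A gauge on a topological space: an assignment of an open neighbourhood to each point. -/
def IsGauge (Δ : Ω → Set Ω) : Prop := ∀ s, IsOpen (Δ s) ∧ s ∈ Δ s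

/-- A generalized McShane partition: a disjoint sequence of measurable sets of finite
measure with tags, covering `Ω` up to a `μ`-null set. -/
def IsMcShanePartition (μ : Measure Ω) (E : ℕ → Set Ω) (_t : ℕ → Ω) : Prop :=
  (∀ i, MeasurableSet (E i)) ∧ Pairwise (Function.onFun Disjoint E) ∧
    (∀ i, μ (E i) < ⊤) ∧ μ (Set.univ \ ⋃ i, E i) = 0

/-- A partition is `Δ`-fine if each set is contained in the gauge-neighbourhood of its tag. -/
def IsFine (Δ : Ω → Set Ω) (E : ℕ → Set Ω) (t : ℕ → Ω) : Prop := ∀ i, E i ⊆ Δ (t i)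

/-- `f` is McShane integrable with integral `w`. -/
def McShaneIntegrableTo (μ : Measure Ω) (f : Ω → X) (w : X) : Prop :=
  ∀ ε > (0 : ℝ), ∃ Δ : Ω → Set Ω, IsGauge Δ ∧ ∀ E t, IsMcShanePartition μ E t → IsFine Δ E t →
    Filter.limsup (fun n => ‖w - ∑ i ∈ Finset.range n, (μ (E i)).toReal • f (t i)‖) atTop ≤ ε

end Defs

open scoped ENNReal NNReal

/-- On a complete quasi-Radon outer regular probability space, every Bochner integrable
function `f : Ω → X` into a Banach space is McShane integrable, and the McShane integral
equals the Bochner integral. -/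
theorem mcShane_of_bochner
    {Ω : Type*} [MeasurableSpace Ω] [TopologicalSpace Ω] [OpensMeasurableSpace Ω]
    {X : Type*} [NormedAddCommGroup X] [NormedSpace ℝ X] [CompleteSpace X]
    (μ : Measure Ω) [IsProbabilityMeasure μ] [μ.IsComplete]
    [μ.OuterRegular] [μ.WeaklyRegular]
    (htau : ∀ 𝒢 : Set (Set Ω), (∀ G ∈ 𝒢, IsOpen G) → 𝒢.Nonempty →
      DirectedOn (· ⊆ ·) 𝒢 → μ (⋃₀ 𝒢) = ⨆ G ∈ 𝒢, μ G)
    (f : Ω → X) (hf : Integrable f μ) :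
    McShaneIntegrableTo μ f (∫ ω, f ω ∂μ) := by
  classical
  borelize X
  intro ε hε
  set w : X := ∫ ω, f ω ∂μ with hw_def
  obtain ⟨g, hg_sm, hfg⟩ := hf.aestronglyMeasurable
  have hg_meas : Measurable g := hg_sm.measurable
  set D : Set Ω := {ω | f ω ≠ g ω} with hD_def
  have hD0 : μ D = 0 := hfg
  have hDmeas : MeasurableSet D := measurableSet_of_null hD0
  have hfD : ∀ ω, ω ∉ D → f ω = g ω := fun ω hω => not_not.1 hω
  set η : ℝ := ε / 8 with hη_def
  have hηpos : 0 < η := by positivity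
  -- absolute continuity of the integral
  obtain ⟨δ, hδpos, hδ⟩ : ∃ δ > (0:ℝ), ∀ s : Set Ω, MeasurableSet s →
      μ s ≤ ENNReal.ofReal δ → ∫ ω in s, ‖f ω‖ ∂μ ≤ ε / 8 := by
    obtain ⟨δ, hδpos, hδ⟩ := (memLp_one_iff_integrable.2 hf).eLpNorm_indicator_le le_rfl
      ENNReal.one_ne_top (show (0:ℝ) < ε / 8 by positivity)
    refine ⟨δ, hδpos, fun s hs hμs => ?_⟩
    have h1 := hδ s hs hμs
    have h2 : eLpNorm (s.indicator f) 1 μ = ∫⁻ ω in s, ‖f ω‖₊ ∂μ := by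
      rw [eLpNorm_one_eq_lintegral_enorm, ← lintegral_indicator hs]
      congr 1 with ω
      simp only [Set.indicator_apply]
      split_ifs <;> simp [enorm_eq_nnnorm]
    have h3 : ∫ ω in s, ‖f ω‖ ∂μ = (∫⁻ ω in s, ‖f ω‖₊ ∂μ).toReal :=
      integral_norm_eq_lintegral_enorm (hf.aestronglyMeasurable.restrict)
    rw [h3]
    refine ENNReal.toReal_le_of_le_ofReal (by positivity) ?_
    rw [← h2]; exact h1
  -- a dense sequence for the (separable) essential range of f
  have hsep : TopologicalSpace.IsSeparable (insert (0:X) (Set.range g)) :=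
    ((Set.finite_singleton (0:X)).isSeparable).union hg_sm.isSeparable_range
      |>.mono (by rw [Set.insert_eq])
  obtain ⟨c, hc_count, hc_sub⟩ := hsep
  have hc_ne : c.Nonempty := by
    rcases Set.eq_empty_or_nonempty c with h | h
    · exfalso
      have : (0:X) ∈ closure c := hc_sub (Set.mem_insert _ _)
      simp [h] at this
    · exact h
  obtain ⟨x, hx⟩ := hc_count.exists_eq_range hc_ne
  have hdense : ∀ ω, ∃ j : ℕ, dist (g ω) (x j) < η := by
    intro ω
    have h1 : g ω ∈ closure (Set.range x) := by
      rw [← hx]; exact hc_sub (Set.mem_insert_of_mem _ (Set.mem_range_self ω))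
    obtain ⟨b, hb, hdb⟩ := Metric.mem_closure_iff.1 h1 η hηpos
    obtain ⟨j, rfl⟩ := hb
    exact ⟨j, hdb⟩
  -- the countable family of pieces
  set P : ℕ ⊕ ℕ → Set Ω := fun κ =>
    match κ with
    | .inl j => Dᶜ ∩ g ⁻¹' Metric.ball (x j) η
    | .inr m => D ∩ {ω | ‖f ω‖ < m + 1} with hP_def
  set M : ℕ ⊕ ℕ → ℝ := fun κ =>
    match κ with
    | .inl j => ‖x j‖ + η
    | .inr m => m + 1 with hM_def
  have hPmeas : ∀ κ, MeasurableSet (P κ) := by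
    rintro (j | m)
    · exact (hDmeas.compl).inter (hg_meas Metric.isOpen_ball.measurableSet)
    · exact measurableSet_of_null (measure_mono_null Set.inter_subset_left hD0)
  have hPnull : ∀ m, μ (P (.inr m)) = 0 :=
    fun m => measure_mono_null Set.inter_subset_left hD0
  have hM0 : ∀ κ, 0 ≤ M κ := by
    rintro (j | m)
    · show (0:ℝ) ≤ ‖x j‖ + η
      positivity
    · show (0:ℝ) ≤ (m:ℝ) + 1
      positivity
  have hMle : ∀ κ, ∀ t ∈ P κ, ‖f t‖ ≤ M κ := by
    rintro (j | m) t ht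
    · obtain ⟨htD, htb⟩ := ht
      rw [hfD t htD]
      calc ‖g t‖ = ‖(g t - x j) + x j‖ := by rw [sub_add_cancel]
        _ ≤ ‖g t - x j‖ + ‖x j‖ := norm_add_le _ _
        _ ≤ ‖x j‖ + η := by
            rw [← dist_eq_norm]
            have := Metric.mem_ball.1 htb
            linarith
    · exact le_of_lt ht.2
  have hPcov : ∀ s, ∃ κ, s ∈ P κ := by
    intro s
    by_cases hs : s ∈ D
    · refine ⟨.inr ⌊‖f s‖⌋₊, hs, ?_⟩
      simpa using Nat.lt_floor_add_one ‖f s‖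
    · obtain ⟨j, hj⟩ := hdense s
      exact ⟨.inl j, hs, Metric.mem_ball.2 hj⟩
  -- the oscillation estimate on each piece
  have hkey : ∀ κ, ∀ t ∈ P κ, ∀ A : Set Ω, MeasurableSet A → A ⊆ P κ →
      ∫ ω in A, ‖f ω - f t‖ ∂μ ≤ 2 * η * (μ A).toReal := by
    rintro (j | m) t ht A hA hAP
    · have hb : ∀ ω ∈ A, ‖‖f ω - f t‖‖ ≤ 2 * η := by
        intro ω hω
        obtain ⟨hωD, hωb⟩ := hAP hω
        rw [Real.norm_eq_abs, abs_of_nonneg (norm_nonneg _), hfD ω hωD, hfD t ht.1,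
          ← dist_eq_norm]
        have h1 : dist (g ω) (g t) ≤ dist (g ω) (x j) + dist (g t) (x j) :=
          dist_triangle_right _ _ _
        have h2 := Metric.mem_ball.1 hωb
        have h3 := Metric.mem_ball.1 ht.2
        linarith
      calc ∫ ω in A, ‖f ω - f t‖ ∂μ ≤ ‖∫ ω in A, ‖f ω - f t‖ ∂μ‖ := le_abs_self _
        _ ≤ 2 * η * (μ A).toReal :=
          norm_setIntegral_le_of_norm_le_const (measure_lt_top μ A) hb
    · have hA0 : μ A = 0 := measure_mono_null hAP (hPnull m)
      have h0 : μ.restrict A = 0 := Measure.restrict_eq_zero.2 hA0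
      rw [h0, integral_zero_measure, hA0]
      simp
  -- weights
  set θ : ℝ≥0∞ := min (ENNReal.ofReal δ) (ENNReal.ofReal (ε/8)) with hθ_def
  have hθpos : 0 < θ := lt_min (ENNReal.ofReal_pos.2 hδpos) (ENNReal.ofReal_pos.2 (by positivity))
  obtain ⟨v, hvpos, hvsum⟩ := ENNReal.exists_pos_sum_of_countable' hθpos.ne' (ℕ ⊕ ℕ)
  set r : (ℕ ⊕ ℕ) → ℝ≥0∞ := fun κ => v κ / (ENNReal.ofReal (M κ) + 1) with hr_def
  have hrpos : ∀ κ, 0 < r κ := fun κ =>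
    ENNReal.div_pos (hvpos κ).ne' (by simp)
  -- open hulls
  have hU : ∀ κ, ∃ U : Set Ω, P κ ⊆ U ∧ IsOpen U ∧ μ (U \ P κ) < r κ := by
    intro κ
    obtain ⟨U, hPU, hUo, hμU⟩ := Set.exists_isOpen_lt_of_lt (P κ) (μ (P κ) + r κ)
      (ENNReal.lt_add_right (measure_ne_top μ _) (hrpos κ).ne')
    exact ⟨U, hPU, hUo, measure_diff_lt_of_lt_add (hPmeas κ).nullMeasurableSet hPU
      (measure_ne_top μ _) hμU⟩
  choose U hPU hUopen hUP using hU
  have hUP1 : ∀ κ, μ (U κ \ P κ) ≤ v κ := by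
    intro κ
    refine le_trans (hUP κ).le ?_
    calc v κ / (ENNReal.ofReal (M κ) + 1) ≤ v κ / 1 :=
        ENNReal.div_le_div le_rfl (le_add_self)
      _ = v κ := by simp
  have hUP2 : ∀ κ, ENNReal.ofReal (M κ) * μ (U κ \ P κ) ≤ v κ := by
    intro κ
    calc ENNReal.ofReal (M κ) * μ (U κ \ P κ)
        ≤ (ENNReal.ofReal (M κ) + 1) * r κ := by
          exact mul_le_mul' le_self_add (hUP κ).le
      _ = v κ := ENNReal.mul_div_cancel' (by simp) (by simp)
  -- the gauge
  choose κsel hκsel using hPcov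
  refine ⟨fun s => U (κsel s), fun s => ⟨hUopen _, hPU _ (hκsel s)⟩, ?_⟩
  rintro E t ⟨hEmeas, hEdisj, hEfin, hEco⟩ hfine
  set κi : ℕ → ℕ ⊕ ℕ := fun i => κsel (t i) with hκi_def
  set F : ℕ → Set Ω := fun i => E i \ P (κi i) with hF_def
  have hFmeas : ∀ i, MeasurableSet (F i) := fun i => (hEmeas i).diff (hPmeas _)
  have hFsub : ∀ i, F i ⊆ U (κi i) \ P (κi i) := by
    intro i ω hω
    exact ⟨hfine i hω.1, hω.2⟩
  have hFdisj : Pairwise (Function.onFun Disjoint F) := fun i j hij =>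
    ((hEdisj hij).mono Set.diff_subset Set.diff_subset)
  -- the tsum of the measures of the F i is at most θ
  have hfiber_meas : ∀ κ, (∑' i : κi ⁻¹' {κ}, μ (F i)) ≤ μ (U κ \ P κ) := by
    intro κ
    have hdisj : Pairwise (Function.onFun Disjoint (fun i : κi ⁻¹' {κ} => F i)) :=
      fun a b hab => hFdisj (Subtype.coe_injective.ne hab)
    rw [← measure_iUnion hdisj (fun i => hFmeas i)]
    refine measure_mono (Set.iUnion_subset ?_)
    rintro ⟨i, hi⟩
    have : κi i = κ := hi
    simpa [this] using hFsub i
  have hμF_tsum : (∑' i, μ (F i)) ≤ θ := by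
    rw [← ENNReal.tsum_fiberwise (fun i => μ (F i)) κi]
    calc ∑' κ, ∑' i : κi ⁻¹' {κ}, μ (F i) ≤ ∑' κ, v κ :=
        ENNReal.tsum_le_tsum (fun κ => le_trans (hfiber_meas κ) (hUP1 κ))
      _ ≤ θ := hvsum.le
  have hMF_tsum : (∑' i, ENNReal.ofReal (M (κi i)) * μ (F i)) ≤ θ := by
    rw [← ENNReal.tsum_fiberwise (fun i => ENNReal.ofReal (M (κi i)) * μ (F i)) κi]
    refine le_trans (ENNReal.tsum_le_tsum (fun κ => ?_)) hvsum.le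
    have : ∑' i : κi ⁻¹' {κ}, ENNReal.ofReal (M (κi i)) * μ (F i)
        = ENNReal.ofReal (M κ) * ∑' i : κi ⁻¹' {κ}, μ (F i) := by
      rw [← ENNReal.tsum_mul_left]
      congr 1 with i
      rw [show κi i = κ from i.2]
    rw [this]
    exact le_trans (mul_le_mul' le_rfl (hfiber_meas κ)) (hUP2 κ)
  -- the union Z of all the F i has small measure
  set Z : Set Ω := ⋃ i, F i with hZ_def
  have hZmeas : MeasurableSet Z := MeasurableSet.iUnion hFmeas
  have hZint : ∫ ω in Z, ‖f ω‖ ∂μ ≤ ε / 8 := by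
    refine hδ Z hZmeas (le_trans (le_trans (measure_iUnion_le _) hμF_tsum) ?_)
    exact min_le_left _ _
  -- per-index estimate
  have hterm : ∀ i, ‖(∫ ω in E i, f ω ∂μ) - (μ (E i)).toReal • f (t i)‖ ≤
      2 * η * (μ (E i ∩ P (κi i))).toReal + (∫ ω in F i, ‖f ω‖ ∂μ)
        + M (κi i) * (μ (F i)).toReal := by
    intro i
    set κ := κi i
    set A := E i ∩ P κ with hA_def
    have hAmeas : MeasurableSet A := (hEmeas i).inter (hPmeas κ)
    have hsplit : (∫ ω in E i, f ω ∂μ) = (∫ ω in A, f ω ∂μ) + ∫ ω in F i, f ω ∂μ :=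
      (integral_inter_add_diff (hPmeas κ) hf.integrableOn).symm
    have hmsplit : (μ (E i)).toReal = (μ A).toReal + (μ (F i)).toReal := by
      rw [← ENNReal.toReal_add (measure_ne_top μ _) (measure_ne_top μ _)]
      congr 1
      exact (measure_inter_add_diff (E i) (hPmeas κ)).symm
    have h1 : (∫ ω in A, f ω ∂μ) - (μ A).toReal • f (t i) = ∫ ω in A, (f ω - f (t i)) ∂μ := by
      rw [integral_sub hf.integrableOn (integrableOn_const (measure_lt_top μ _).ne),
        setIntegral_const]
      rfl
    have h1' : ‖(∫ ω in A, f ω ∂μ) - (μ A).toReal • f (t i)‖ ≤ 2 * η * (μ A).toReal := by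
      rw [h1]
      refine le_trans (norm_integral_le_integral_norm _) ?_
      exact hkey κ (t i) (hκsel (t i)) A hAmeas Set.inter_subset_right
    have h2 : ‖(∫ ω in F i, f ω ∂μ) - (μ (F i)).toReal • f (t i)‖ ≤
        (∫ ω in F i, ‖f ω‖ ∂μ) + M κ * (μ (F i)).toReal := by
      refine le_trans (norm_sub_le _ _) (add_le_add (norm_integral_le_integral_norm _) ?_)
      rw [norm_smul, Real.norm_eq_abs, abs_of_nonneg ENNReal.toReal_nonneg, mul_comm]
      exact mul_le_mul_of_nonneg_right (hMle κ (t i) (hκsel (t i))) ENNReal.toReal_nonneg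
    calc ‖(∫ ω in E i, f ω ∂μ) - (μ (E i)).toReal • f (t i)‖
        = ‖((∫ ω in A, f ω ∂μ) - (μ A).toReal • f (t i))
            + ((∫ ω in F i, f ω ∂μ) - (μ (F i)).toReal • f (t i))‖ := by
          rw [hsplit, hmsplit, add_smul]
          congr 1
          abel
      _ ≤ ‖(∫ ω in A, f ω ∂μ) - (μ A).toReal • f (t i)‖
            + ‖(∫ ω in F i, f ω ∂μ) - (μ (F i)).toReal • f (t i)‖ := norm_add_le _ _
      _ ≤ 2 * η * (μ A).toReal + ((∫ ω in F i, ‖f ω‖ ∂μ) + M κ * (μ (F i)).toReal) :=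
          add_le_add h1' h2
      _ = 2 * η * (μ (E i ∩ P (κi i))).toReal + (∫ ω in F i, ‖f ω‖ ∂μ)
            + M (κi i) * (μ (F i)).toReal := by ring
  -- bounds on the three sums, uniform in n
  have hb : ∀ n, ∑ i ∈ Finset.range n, 2 * η * (μ (E i ∩ P (κi i))).toReal ≤ 2 * η := by
    intro n
    have h1 : ∀ i, (μ (E i ∩ P (κi i))).toReal ≤ (μ (E i)).toReal := fun i =>
      ENNReal.toReal_mono (measure_ne_top μ _) (measure_mono Set.inter_subset_left)
    calc ∑ i ∈ Finset.range n, 2 * η * (μ (E i ∩ P (κi i))).toReal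
        ≤ ∑ i ∈ Finset.range n, 2 * η * (μ (E i)).toReal :=
          Finset.sum_le_sum fun i _ => by
            exact mul_le_mul_of_nonneg_left (h1 i) (by positivity)
      _ = 2 * η * (∑ i ∈ Finset.range n, (μ (E i)).toReal) := by rw [Finset.mul_sum]
      _ ≤ 2 * η * 1 := by
          refine mul_le_mul_of_nonneg_left ?_ (by positivity)
          rw [← ENNReal.toReal_sum (fun i _ => measure_ne_top μ _)]
          refine ENNReal.toReal_le_of_le_ofReal one_pos.le ?_
          rw [← measure_biUnion_finset (fun a _ b _ hab => hEdisj hab) (fun i _ => hEmeas i)]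
          calc μ (⋃ i ∈ Finset.range n, E i) ≤ μ Set.univ := measure_mono (Set.subset_univ _)
            _ ≤ ENNReal.ofReal 1 := by simp
      _ = 2 * η := mul_one _
  have hc : ∀ n, ∑ i ∈ Finset.range n, (∫ ω in F i, ‖f ω‖ ∂μ) ≤ ε / 8 := by
    intro n
    have h1 : ∑ i ∈ Finset.range n, (∫ ω in F i, ‖f ω‖ ∂μ)
        = ∫ ω in ⋃ i ∈ Finset.range n, F i, ‖f ω‖ ∂μ := by
      rw [integral_biUnion_finset _ (fun i _ => hFmeas i)
        (fun a _ b _ hab => hFdisj hab) (fun i _ => hf.norm.integrableOn)]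
    rw [h1]
    refine le_trans (setIntegral_mono_set hf.norm.integrableOn
      (Eventually.of_forall fun ω => norm_nonneg _)
      (HasSubset.Subset.eventuallyLE ?_)) hZint
    exact Set.iUnion₂_subset fun i _ => Set.subset_iUnion F i
  have hd : ∀ n, ∑ i ∈ Finset.range n, M (κi i) * (μ (F i)).toReal ≤ ε / 8 := by
    intro n
    have h1 : ∀ i, M (κi i) * (μ (F i)).toReal
        = (ENNReal.ofReal (M (κi i)) * μ (F i)).toReal := by
      intro i
      rw [ENNReal.toReal_mul, ENNReal.toReal_ofReal (hM0 _)]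
    calc ∑ i ∈ Finset.range n, M (κi i) * (μ (F i)).toReal
        = (∑ i ∈ Finset.range n, ENNReal.ofReal (M (κi i)) * μ (F i)).toReal := by
          rw [ENNReal.toReal_sum (fun i _ => ENNReal.mul_ne_top ENNReal.ofReal_ne_top
            (measure_ne_top μ _))]
          exact Finset.sum_congr rfl fun i _ => h1 i
      _ ≤ (∑' i, ENNReal.ofReal (M (κi i)) * μ (F i)).toReal := by
          refine ENNReal.toReal_mono ?_ (ENNReal.sum_le_tsum _)
          exact ne_top_of_le_ne_top
            (((min_le_right (ENNReal.ofReal δ) (ENNReal.ofReal (ε/8))).trans_lt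
              ENNReal.ofReal_lt_top).ne) hMF_tsum
      _ ≤ ε / 8 := by
          refine ENNReal.toReal_le_of_le_ofReal (by positivity) ?_
          exact le_trans hMF_tsum (min_le_right _ _)
  -- partial unions
  set S : ℕ → Set Ω := fun n => ⋃ i ∈ Finset.range n, E i with hS_def
  have hSmeas : ∀ n, MeasurableSet (S n) := fun n =>
    MeasurableSet.biUnion (Finset.range n).countable_toSet (fun i _ => hEmeas i)
  have hcompl0 : μ ((⋃ i, E i)ᶜ) = 0 := by rw [Set.compl_eq_univ_diff]; exact hEco
  have hIunion : ∫ ω in ⋃ i, E i, ‖f ω‖ ∂μ = ∫ ω, ‖f ω‖ ∂μ := by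
    have h := integral_add_compl (MeasurableSet.iUnion hEmeas) hf.norm
    rwa [Measure.restrict_eq_zero.2 hcompl0, integral_zero_measure, add_zero] at h
  have hhassum : HasSum (fun i => ∫ ω in E i, ‖f ω‖ ∂μ) (∫ ω, ‖f ω‖ ∂μ) := by
    have h := hasSum_integral_iUnion hEmeas hEdisj hf.norm.integrableOn
    rwa [hIunion] at h
  have hpartial : Tendsto (fun n => ∑ i ∈ Finset.range n, ∫ ω in E i, ‖f ω‖ ∂μ) atTop
      (nhds (∫ ω, ‖f ω‖ ∂μ)) := hhassum.tendsto_sum_nat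
  have haux : ∀ n, ∫ ω in (S n)ᶜ, ‖f ω‖ ∂μ
      = (∫ ω, ‖f ω‖ ∂μ) - ∑ i ∈ Finset.range n, ∫ ω in E i, ‖f ω‖ ∂μ := by
    intro n
    have h2 : ∑ i ∈ Finset.range n, ∫ ω in E i, ‖f ω‖ ∂μ = ∫ ω in S n, ‖f ω‖ ∂μ :=
      (integral_biUnion_finset _ (fun i _ => hEmeas i) (fun a _ b _ hab => hEdisj hab)
        (fun i _ => hf.norm.integrableOn)).symm
    rw [h2, eq_sub_iff_add_eq, add_comm]
    exact integral_add_compl (hSmeas n) hf.norm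
  have ha : Tendsto (fun n => ∫ ω in (S n)ᶜ, ‖f ω‖ ∂μ) atTop (nhds 0) := by
    simp only [haux]
    have h := (tendsto_const_nhds (x := ∫ ω, ‖f ω‖ ∂μ) (f := atTop (α := ℕ))).sub hpartial
    simpa using h
  -- per-n estimate
  have hmain : ∀ n, ‖w - ∑ i ∈ Finset.range n, (μ (E i)).toReal • f (t i)‖
      ≤ (∫ ω in (S n)ᶜ, ‖f ω‖ ∂μ) + ε / 2 := by
    intro n
    have hw2 : w = (∫ ω in S n, f ω ∂μ) + ∫ ω in (S n)ᶜ, f ω ∂μ :=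
      (integral_add_compl (hSmeas n) hf).symm
    have hSint : ∫ ω in S n, f ω ∂μ = ∑ i ∈ Finset.range n, ∫ ω in E i, f ω ∂μ :=
      integral_biUnion_finset _ (fun i _ => hEmeas i) (fun a _ b _ hab => hEdisj hab)
        (fun i _ => hf.integrableOn)
    have hdecomp : w - ∑ i ∈ Finset.range n, (μ (E i)).toReal • f (t i)
        = (∫ ω in (S n)ᶜ, f ω ∂μ)
          + ∑ i ∈ Finset.range n, ((∫ ω in E i, f ω ∂μ) - (μ (E i)).toReal • f (t i)) := by
      rw [Finset.sum_sub_distrib, ← hSint, hw2]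
      abel
    rw [hdecomp]
    refine le_trans (norm_add_le _ _) (add_le_add (norm_integral_le_integral_norm _) ?_)
    refine le_trans (norm_sum_le _ _) ?_
    refine le_trans (Finset.sum_le_sum fun i _ => hterm i) ?_
    have hsplit2 : (ε / 2 : ℝ) = 2 * η + (ε / 8) + (ε / 8) := by rw [hη_def]; ring
    rw [hsplit2, Finset.sum_add_distrib, Finset.sum_add_distrib]
    exact add_le_add (add_le_add (hb n) (hc n)) (hd n)
  -- conclude
  have htend : Tendsto (fun n => (∫ ω in (S n)ᶜ, ‖f ω‖ ∂μ) + ε / 2) atTop (nhds (ε / 2)) := by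
    simpa using ha.add (tendsto_const_nhds (x := ε / 2) (f := atTop (α := ℕ)))
  calc limsup (fun n => ‖w - ∑ i ∈ Finset.range n, (μ (E i)).toReal • f (t i)‖) atTop
      ≤ limsup (fun n => (∫ ω in (S n)ᶜ, ‖f ω‖ ∂μ) + ε / 2) atTop := by
        refine limsup_le_limsup (Eventually.of_forall hmain) ?_ ?_
        · exact isCoboundedUnder_le_of_le atTop (fun n => norm_nonneg _)
        · exact htend.isBoundedUnder_le
    _ = ε / 2 := htend.limsup_eq
    _ ≤ ε := by linarith
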